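/- Let M be a finite antichain of monomials over X and ⟨M⟩ the ideal of [X] it generates. The following are equivalent: (i) π⁻¹(⟨M⟩) is a finitely generated ideal of X*; (ii) for every m in M and all letters x, y, z with z ≠ x and z ≠ y (possibly x = y) such that xy divides m, there exists w in M such that w/z divides m·x⁻¹ or w/z divides m·y⁻¹; (iii) for every m in M and every letter z such that no power z^r (r ≥ 1) lies in M, if m/z has total degree at least 2 then there exist r ≥ 1 and a letter t ≠ z with t ∈ supp(m) and z^r·t ∈ M; (iv) π⁻¹(⟨M⟩) is generated, as an ideal of X*, by the set of words u with π(u) ∈ ⟨M⟩ and ∂_x π(u) ≤ max_{v ∈ M_2} ∂_x v for every letter x, where M_2 is the set of members of M whose support has size at most 2. -/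

import Mathlib

variable {X : Type*} [DecidableEq X]

/-- The canonical projection from words to monomials (exponent vectors). -/
noncomputable def piW (w : List X) : X →₀ ℕ := Multiset.toFinsupp (↑w : Multiset X)

/-- The two-sided ideal of the free monoid generated by a set of words. -/
def wordIdeal (T : Set (List X)) : Set (List X) := {v | ∃ t ∈ T, t <:+: v}

/-- The ideal of the free commutative monoid generated by a set of monomials. -/
def monIdeal (M : Set (X →₀ ℕ)) : Set (X →₀ ℕ) := {v | ∃ m ∈ M, m ≤ v}

/-- An ideal of the free monoid is finitely generated. -/
def FGIdeal (J : Set (List X)) : Prop := ∃ T : Set (List X), T.Finite ∧ wordIdeal T = J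

/-- A set of monomials is an antichain if no member divides another. -/
def IsMonAntichain (M : Set (X →₀ ℕ)) : Prop := ∀ u ∈ M, ∀ v ∈ M, u ≤ v → u = v

set_option linter.unusedSectionVars false
namespace Stmt16Aux

lemma piW_apply (u : List X) (x : X) : piW u x = u.count x := by simp [piW]

lemma piW_le_of_infix {u v : List X} (h : u <:+: v) : piW u ≤ piW v := by
  rw [Finsupp.le_def]; intro x
  simp only [piW_apply]; exact h.sublist.count_le x

lemma piW_toList (m : X →₀ ℕ) : piW (Finsupp.toMultiset m).toList = m := by
  simp [piW]

def deg (f : X →₀ ℕ) : ℕ := f.sum fun _ e => e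

lemma deg_eq_card (f : X →₀ ℕ) : deg f = Multiset.card (Finsupp.toMultiset f) := by
  rw [Finsupp.card_toMultiset]; rfl

lemma deg_add (f g : X →₀ ℕ) : deg (f + g) = deg f + deg g := by
  simp [deg_eq_card, Finsupp.toMultiset_add]

lemma deg_mono {f g : X →₀ ℕ} (h : f ≤ g) : deg f ≤ deg g := by
  have : f + (g - f) = g := add_tsub_cancel_of_le h
  rw [← this, deg_add]; omega

lemma deg_single (x : X) (n : ℕ) : deg (Finsupp.single x n) = n := by
  simp [deg_eq_card, Finsupp.toMultiset_single]

lemma deg_piW (u : List X) : deg (piW u) = u.length := by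
  rw [deg_eq_card, piW, Multiset.toFinsupp_toMultiset]; simp

lemma eq_single_of_deg_one {f : X →₀ ℕ} (h : deg f = 1) : ∃ t, f = Finsupp.single t 1 := by
  rw [deg_eq_card] at h
  obtain ⟨a, ha⟩ := Multiset.card_eq_one.mp h
  refine ⟨a, ?_⟩
  have := congrArg Multiset.toFinsupp ha
  rwa [Finsupp.toMultiset_toFinsupp, Multiset.toFinsupp_singleton] at this

lemma deg_eq_zero {f : X →₀ ℕ} (h : deg f = 0) : f = 0 := by
  rw [deg_eq_card, Multiset.card_eq_zero] at h
  have := congrArg Multiset.toFinsupp h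
  rwa [Finsupp.toMultiset_toFinsupp, Multiset.toFinsupp_zero] at this

lemma J_infix {M : Set (X →₀ ℕ)} {u v : List X} (h : u <:+: v)
    (hu : piW u ∈ monIdeal M) : piW v ∈ monIdeal M := by
  obtain ⟨m, hm, hle⟩ := hu
  exact ⟨m, hm, hle.trans (piW_le_of_infix h)⟩

lemma erase_add_single (z : X) (f : X →₀ ℕ) :
    f = Finsupp.single z (f z) + Finsupp.erase z f := by
  exact (Finsupp.single_add_erase z f).symm

lemma erase_apply' (z c : X) (w : X →₀ ℕ) :
    Finsupp.erase z w c = if z = c then 0 else w c := by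
  split_ifs with h
  · subst h; exact Finsupp.erase_same
  · exact Finsupp.erase_ne (Ne.symm h)

lemma imp12 {M : Set (X →₀ ℕ)} (h : FGIdeal (piW ⁻¹' monIdeal M)) :
    ∀ m ∈ M, ∀ x y z : X, z ≠ x → z ≠ y →
      Finsupp.single x 1 + Finsupp.single y 1 ≤ m →
      ∃ w ∈ M, Finsupp.erase z w ≤ m - Finsupp.single x 1 ∨
        Finsupp.erase z w ≤ m - Finsupp.single y 1 := by
  obtain ⟨T, hTfin, hgen⟩ := h
  intro m hm x y z hzx hzy hxy
  have hxy' : ∀ c, (if x = c then 1 else 0) + (if y = c then 1 else 0) ≤ m c := by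
    intro c
    have := Finsupp.le_def.mp hxy c
    simpa [Finsupp.add_apply, Finsupp.single_apply] using this
  set n := hTfin.toFinset.sup List.length with hn
  have hTlen : ∀ t ∈ T, t.length ≤ n := fun t ht => Finset.le_sup (hTfin.mem_toFinset.mpr ht)
  set mxy := m - (Finsupp.single x 1 + Finsupp.single y 1) with hmxy
  have hmxyc : ∀ c, mxy c = m c - ((if x = c then 1 else 0) + (if y = c then 1 else 0)) := by
    intro c; simp [hmxy, Finsupp.tsub_apply, Finsupp.add_apply, Finsupp.single_apply]
  set w0 := (Finsupp.toMultiset mxy).toList with hw0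
  have hw0c : ∀ c, w0.count c = mxy c := by
    intro c; rw [← piW_apply, hw0, piW_toList]
  set u := ([x] ++ List.replicate n z) ++ ([y] ++ w0) with hu
  have huc : ∀ c, piW u c =
      ((if x = c then 1 else 0) + (if z = c then n else 0)) +
      ((if y = c then 1 else 0) + mxy c) := by
    intro c
    simp only [hu, piW_apply, List.count_append, List.count_replicate, List.count_cons,
      List.count_nil, beq_iff_eq, hw0c, List.count_singleton', List.singleton_append]
    split_ifs <;> omega
  have humem : u ∈ wordIdeal T := by
    rw [hgen]
    refine ⟨m, hm, ?_⟩
    rw [Finsupp.le_def]; intro c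
    rw [huc c, hmxyc c]
    have := hxy' c
    split_ifs <;> omega
  obtain ⟨t, htT, s₁, s₂, hsplit⟩ := humem
  obtain ⟨w, hwM, hwt⟩ : piW t ∈ monIdeal M := by
    have : t ∈ wordIdeal T := ⟨t, htT, List.infix_refl t⟩
    rwa [hgen] at this
  refine ⟨w, hwM, ?_⟩
  have hwc : ∀ c, w c ≤ t.count c := by
    intro c; rw [← piW_apply]; exact Finsupp.le_def.mp hwt c
  cases s₁ with
  | nil =>
    right
    have hpre : t <+: u := ⟨s₂, by simpa using hsplit⟩
    have hp2 : ([x] ++ List.replicate n z) <+: u := ⟨[y] ++ w0, rfl⟩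
    have hlen : t.length ≤ ([x] ++ List.replicate n z).length := by
      have := hTlen t htT; simp; omega
    have hde := List.prefix_of_prefix_length_le hpre hp2 hlen
    have htc : ∀ c, t.count c ≤ (if x = c then 1 else 0) + (if z = c then n else 0) := by
      intro c
      have := hde.sublist.count_le c
      simp only [List.count_append, List.count_replicate, List.count_cons, List.count_nil, beq_iff_eq,
        List.count_singleton', List.singleton_append] at this
      split_ifs at this ⊢ <;> omega
    rw [Finsupp.le_def]; intro c
    rw [Finsupp.tsub_apply, erase_apply', Finsupp.single_apply]
    have h1 := (hwc c).trans (htc c)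
    have h2 := hxy' c
    split_ifs at h1 h2 ⊢ <;> omega
  | cons c0 s₁' =>
    left
    rw [hu] at hsplit
    have hsp : c0 :: (s₁' ++ (t ++ s₂)) = x :: (List.replicate n z ++ ([y] ++ w0)) := by
      simpa [List.append_assoc] using hsplit
    rw [List.cons.injEq] at hsp
    have hinf : t <:+: (List.replicate n z ++ ([y] ++ w0)) := ⟨s₁', s₂, by
      have := hsp.2; simpa [List.append_assoc] using this⟩
    have htc : ∀ c, t.count c ≤ (if z = c then n else 0) + ((if y = c then 1 else 0) + mxy c) := by
      intro c
      have := hinf.sublist.count_le c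
      simp only [List.count_append, List.count_replicate, List.count_cons, List.count_nil, beq_iff_eq,
        List.count_singleton', List.singleton_append, hw0c] at this
      split_ifs at this ⊢ <;> omega
    rw [Finsupp.le_def]; intro c
    rw [Finsupp.tsub_apply, erase_apply', Finsupp.single_apply]
    have h1 := (hwc c).trans (htc c)
    rw [hmxyc c] at h1
    have h2 := hxy' c
    split_ifs at h1 h2 ⊢ <;> omega

lemma erase_le' (z : X) (f : X →₀ ℕ) : Finsupp.erase z f ≤ f := by
  rw [Finsupp.le_def]; intro c; rw [erase_apply']; split_ifs <;> omega

lemma deg_tsub {f g : X →₀ ℕ} (h : g ≤ f) : deg (f - g) = deg f - deg g := by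
  have : (f - g) + g = f := tsub_add_cancel_of_le h
  have := congrArg deg this
  rw [deg_add] at this
  omega

lemma exists_pair {f : X →₀ ℕ} (h : 2 ≤ deg f) :
    ∃ x y, x ∈ f.support ∧ y ∈ f.support ∧
      Finsupp.single x 1 + Finsupp.single y 1 ≤ f := by
  by_cases hc : ∃ x ∈ f.support, 2 ≤ f x
  · obtain ⟨x, hx, h2⟩ := hc
    refine ⟨x, x, hx, hx, ?_⟩
    rw [Finsupp.le_def]; intro c
    simp only [Finsupp.add_apply, Finsupp.single_apply]
    split_ifs with hxc
    · subst hxc; omega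
    · omega
  · push_neg at hc
    have hcard : 2 ≤ f.support.card := by
      by_contra hlt
      push_neg at hlt
      have : deg f ≤ f.support.card * 1 := by
        rw [deg]; rw [Finsupp.sum]
        apply Finset.sum_le_card_nsmul
        intro x hx
        have := hc x hx; omega
      omega
    obtain ⟨x, hx, y, hy, hxy⟩ := Finset.one_lt_card.mp hcard
    refine ⟨x, y, hx, hy, ?_⟩
    rw [Finsupp.le_def]; intro c
    have hfx := Finsupp.mem_support_iff.mp hx
    have hfy := Finsupp.mem_support_iff.mp hy
    simp only [Finsupp.add_apply, Finsupp.single_apply]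
    split_ifs with h1 h2 h2
    · exact absurd (h1.trans h2.symm) hxy
    · subst h1; omega
    · subst h2; omega
    · omega

lemma imp23 {M : Set (X →₀ ℕ)} (hM : IsMonAntichain M)
    (h2 : ∀ m ∈ M, ∀ x y z : X, z ≠ x → z ≠ y →
      Finsupp.single x 1 + Finsupp.single y 1 ≤ m →
      ∃ w ∈ M, Finsupp.erase z w ≤ m - Finsupp.single x 1 ∨
        Finsupp.erase z w ≤ m - Finsupp.single y 1) :
    ∀ m ∈ M, ∀ z : X, (∀ r : ℕ, 1 ≤ r → Finsupp.single z r ∉ M) →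
      2 ≤ ((Finsupp.erase z m).sum fun _ e => e) →
      ∃ r : ℕ, 1 ≤ r ∧ ∃ t : X, t ≠ z ∧ t ∈ m.support ∧
        Finsupp.single z r + Finsupp.single t 1 ∈ M := by
  have main : ∀ (z : X), (∀ r : ℕ, 1 ≤ r → Finsupp.single z r ∉ M) →
      ∀ n : ℕ, ∀ m ∈ M, deg (Finsupp.erase z m) ≤ n → 2 ≤ deg (Finsupp.erase z m) →
      ∃ r : ℕ, 1 ≤ r ∧ ∃ t : X, t ≠ z ∧ t ∈ m.support ∧
        Finsupp.single z r + Finsupp.single t 1 ∈ M := by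
    intro z hz n
    induction n with
    | zero => intro m hm hle hdeg; omega
    | succ n IH =>
      intro m hm hle hdeg
      obtain ⟨x, y, hxs, hys, hxyle⟩ := exists_pair hdeg
      have hxz : x ≠ z := by
        rw [Finsupp.support_erase] at hxs
        exact (Finset.mem_erase.mp hxs).1
      have hyz : y ≠ z := by
        rw [Finsupp.support_erase] at hys
        exact (Finset.mem_erase.mp hys).1
      have hxyle' : Finsupp.single x 1 + Finsupp.single y 1 ≤ m :=
        hxyle.trans (erase_le' z m)
      obtain ⟨w, hwM, hcase⟩ := h2 m hm x y z hxz.symm hyz.symm hxyle'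
      have key : ∀ x0 : X, x0 ≠ z → Finsupp.single x0 1 ≤ Finsupp.erase z m →
          Finsupp.erase z w ≤ m - Finsupp.single x0 1 →
          ∃ r : ℕ, 1 ≤ r ∧ ∃ t : X, t ≠ z ∧ t ∈ m.support ∧
            Finsupp.single z r + Finsupp.single t 1 ∈ M := by
        intro x0 hx0z hx0m hwle
        rcases Nat.lt_or_ge (deg (Finsupp.erase z w)) 2 with hd | hd
        · interval_cases hdw : deg (Finsupp.erase z w)
          · -- deg 0
            exfalso
            have hew : Finsupp.erase z w = 0 := deg_eq_zero hdw
            have hwz : w = Finsupp.single z (w z) := by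
              conv_lhs => rw [erase_add_single z w]
              rw [hew, add_zero]
            rcases Nat.eq_zero_or_pos (w z) with h0 | h0
            · rw [h0, Finsupp.single_zero] at hwz
              have := hM w hwM m hm (by rw [hwz]; exact zero_le)
              rw [hwz] at this
              have : m = 0 := this.symm
              rw [this] at hdeg
              simp [deg] at hdeg
            · exact hz (w z) h0 (hwz ▸ hwM)
          · -- deg 1
            obtain ⟨t, ht⟩ := eq_single_of_deg_one hdw
            have htz : t ≠ z := by
              intro hteq
              have h1 : Finsupp.erase z w t = 1 := by rw [ht]; simp
              rw [hteq, Finsupp.erase_same] at h1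
              omega
            have hwsum : w = Finsupp.single z (w z) + Finsupp.single t 1 := by
              conv_lhs => rw [erase_add_single z w]
              rw [ht]
            have htm : t ∈ m.support := by
              rw [Finsupp.mem_support_iff]
              have h1 : Finsupp.erase z w t = 1 := by rw [ht]; simp
              have := Finsupp.le_def.mp hwle t
              rw [h1, Finsupp.tsub_apply] at this
              omega
            rcases Nat.eq_zero_or_pos (w z) with h0 | h0
            · exfalso
              rw [h0, Finsupp.single_zero, zero_add] at hwsum
              have hwm : w ≤ m := by
                calc w = Finsupp.single t 1 := hwsum
                _ = Finsupp.erase z w := ht.symm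
                _ ≤ m - Finsupp.single x0 1 := hwle
                _ ≤ m := tsub_le_self
              have hweq : w = m := hM w hwM m hm hwm
              have hme : Finsupp.erase z m = Finsupp.single t 1 := by
                rw [← hweq, hwsum]
                ext c
                rw [erase_apply', Finsupp.single_apply]
                split_ifs with h1 h2
                · exact absurd (h2.trans h1.symm) htz
                · rfl
                · rfl
                · rfl
              rw [hme, deg_single] at hdeg
              omega
            · exact ⟨w z, h0, t, htz, htm, by rw [← hwsum]; exact hwM⟩
        · -- deg ≥ 2 : recurse
          have hstep : Finsupp.erase z w ≤ Finsupp.erase z m - Finsupp.single x0 1 := by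
            rw [Finsupp.le_def]; intro c
            have h1 := Finsupp.le_def.mp hwle c
            rw [Finsupp.tsub_apply, erase_apply'] at h1
            rw [Finsupp.tsub_apply, erase_apply', erase_apply']
            split_ifs at h1 ⊢ <;> omega
          have hdegle : deg (Finsupp.erase z w) ≤ n := by
            have h1 := deg_mono hstep
            rw [deg_tsub hx0m, deg_single] at h1
            omega
          obtain ⟨r, hr, t, htz, htw, hmem⟩ := IH w hwM hdegle hd
          refine ⟨r, hr, t, htz, ?_, hmem⟩
          rw [Finsupp.mem_support_iff]
          have hwt := Finsupp.mem_support_iff.mp htw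
          have h1 := Finsupp.le_def.mp hwle t
          rw [Finsupp.tsub_apply, erase_apply'] at h1
          rw [if_neg (Ne.symm htz)] at h1
          omega
      have hx1 : Finsupp.single x 1 ≤ Finsupp.erase z m := by
        refine le_trans ?_ hxyle
        exact le_add_right le_rfl
      have hy1 : Finsupp.single y 1 ≤ Finsupp.erase z m := by
        refine le_trans ?_ hxyle
        exact le_add_left le_rfl
      rcases hcase with h | h
      · exact key x hxz hx1 h
      · exact key y hyz hy1 h
  intro m hm z hz hdeg
  exact main z hz (deg (Finsupp.erase z m)) m hm le_rfl hdeg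

noncomputable def mbound (M : Set (X →₀ ℕ)) (x : X) : ℕ :=
  sSup {n : ℕ | ∃ v ∈ M, v.support.card ≤ 2 ∧ v x = n}

lemma mbound_set_finite {M : Set (X →₀ ℕ)} (hfin : M.Finite) (x : X) :
    {n : ℕ | ∃ v ∈ M, v.support.card ≤ 2 ∧ v x = n}.Finite := by
  apply Set.Finite.subset (hfin.image (fun v => v x))
  rintro n ⟨v, hv, _, rfl⟩
  exact ⟨v, hv, rfl⟩

lemma le_mbound {M : Set (X →₀ ℕ)} (hfin : M.Finite) {v : X →₀ ℕ} (hv : v ∈ M)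
    (hcard : v.support.card ≤ 2) (x : X) : v x ≤ mbound M x :=
  le_csSup (mbound_set_finite hfin x).bddAbove ⟨v, hv, hcard, rfl⟩

lemma card_two_support (z t : X) (r k : ℕ) :
    (Finsupp.single z r + Finsupp.single t k).support.card ≤ 2 := by
  have hsub : (Finsupp.single z r + Finsupp.single t k).support ⊆ {z, t} := by
    refine Finsupp.support_add.trans (Finset.union_subset ?_ ?_)
    · exact Finsupp.support_single_subset.trans (by simp)
    · exact Finsupp.support_single_subset.trans (by simp)
  refine (Finset.card_le_card hsub).trans ?_
  refine (Finset.card_insert_le _ _).trans ?_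
  simp

/-- Core bound lemma: a word in J neither of whose one-step shortenings is in J
has all exponents bounded by `mbound`. -/
lemma minimal_bounded {M : Set (X →₀ ℕ)} (hfin : M.Finite)
    (h3 : ∀ m ∈ M, ∀ z : X, (∀ r : ℕ, 1 ≤ r → Finsupp.single z r ∉ M) →
      2 ≤ ((Finsupp.erase z m).sum fun _ e => e) →
      ∃ r : ℕ, 1 ≤ r ∧ ∃ t : X, t ≠ z ∧ t ∈ m.support ∧
        Finsupp.single z r + Finsupp.single t 1 ∈ M)
    (u : List X)
    (huJ : piW u ∈ monIdeal M)
    (htail : piW u.tail ∉ monIdeal M)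
    (hdrop : piW u.dropLast ∉ monIdeal M) :
    ∀ z, piW u z ≤ mbound M z := by
  intro z
  by_contra hbz
  push_neg at hbz
  have hz1 : 1 ≤ piW u z := lt_of_le_of_lt (Nat.zero_le _) hbz
  have hune : u ≠ [] := by
    intro h; rw [h] at hz1; simp [piW_apply] at hz1
  set a := u.head hune with ha
  set b := u.getLast hune with hb
  have hcons : a :: u.tail = u := List.cons_head_tail hune
  have hdropb : u.dropLast ++ [b] = u := List.dropLast_append_getLast hune
  have htailc : ∀ c, u.tail.count c + (if a = c then 1 else 0) = u.count c := by
    intro c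
    conv_rhs => rw [← hcons]
    rw [List.count_cons]
    simp [beq_iff_eq]
  have hdropc : ∀ c, u.dropLast.count c + (if b = c then 1 else 0) = u.count c := by
    intro c
    conv_rhs => rw [← hdropb]
    rw [List.count_append, List.count_singleton']
    try simp [beq_iff_eq]
  obtain ⟨m, hm, hmle⟩ := huJ
  have hmlec : ∀ c, m c ≤ u.count c := by
    intro c; rw [← piW_apply]; exact Finsupp.le_def.mp hmle c
  -- the endgame: given a suitable two-supported w ∈ M we reach a contradiction
  have endgame : ∀ w ∈ M, ∀ t : X, t ≠ z →
      (∀ c, c ≠ z → c ≠ t → w c = 0) → w t ≤ 1 → w t ≤ u.count t →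
      w z < piW u z → False := by
    intro w hwM t htz hwform hwt1 hwtu hwz
    rw [piW_apply] at hwz
    by_cases hcrit : a = t ∧ w t = 1 ∧ u.count t = 1
    · -- try dropLast
      by_cases hbt : b = t
      · -- then u = [t], contradiction with z occurring in u
        rcases hu' : u.tail with _ | ⟨c0, v0⟩
        · have huet : u = [a] := by rw [← hcons, hu']
          have hcz : u.count z = 0 := by
            rw [huet]
            exact List.count_eq_zero.mpr (by
              simp only [List.mem_singleton]
              exact fun h => htz ((h.trans hcrit.1).symm))
          omega
        · have hdt : u.dropLast.count t = 0 := by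
            have hc := hdropc t
            rw [if_pos hbt] at hc
            have h1 := htailc t
            rw [if_pos hcrit.1] at h1
            omega
          have hdla : u.dropLast = a :: (c0 :: v0).dropLast := by
            conv_lhs => rw [← hcons, hu']
            rw [List.dropLast_cons₂]
          rw [hdla, List.count_cons] at hdt
          rw [if_pos (by simp [beq_iff_eq, hcrit.1.symm])] at hdt
          omega
      · -- w ≤ piW u.dropLast
        apply hdrop
        refine ⟨w, hwM, ?_⟩
        rw [Finsupp.le_def]; intro c
        rw [piW_apply]
        have hc := hdropc c
        by_cases hcz : c = z
        · subst hcz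
          split_ifs at hc <;> omega
        · by_cases hct : c = t
          · rw [hct]
            have hc' := hdropc t
            rw [if_neg hbt] at hc'
            omega
          · rw [hwform c hcz hct]; omega
    · -- try tail
      apply htail
      refine ⟨w, hwM, ?_⟩
      rw [Finsupp.le_def]; intro c
      rw [piW_apply]
      have hc := htailc c
      by_cases hcz : c = z
      · subst hcz
        split_ifs at hc <;> omega
      · by_cases hct : c = t
        · rw [hct]
          have hc' := htailc t
          by_cases hca : a = t
          · rw [if_pos hca] at hc'
            -- since not hcrit, either w t = 0 or u.count t ≥ 2
            have : w t = 0 ∨ 2 ≤ u.count t := by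
              rcases Nat.lt_or_ge (u.count t) 2 with h2 | h2
              · left
                by_contra hw0
                exact hcrit ⟨hca, by omega, by
                  have h3 : 1 ≤ w t := by omega
                  have h4 : 1 ≤ u.count t := le_trans h3 hwtu
                  omega⟩
              · right; exact h2
            rcases this with h | h <;> omega
          · rw [if_neg hca] at hc'; omega
        · rw [hwform c hcz hct]; omega
  -- now produce a suitable w
  by_cases hpow : ∃ r, 1 ≤ r ∧ Finsupp.single z r ∈ M
  · obtain ⟨r, hr, hrM⟩ := hpow
    have hBz : r ≤ mbound M z := by
      have := le_mbound hfin hrM (by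
        rw [Finsupp.support_single_ne_zero z (by omega)]; simp) z
      simpa using this
    apply htail
    refine ⟨Finsupp.single z r, hrM, ?_⟩
    rw [Finsupp.le_def]; intro c
    rw [piW_apply, Finsupp.single_apply]
    have hc := htailc c
    rw [piW_apply] at hbz
    split_ifs with hzc
    · subst hzc; split_ifs at hc <;> omega
    · omega
  · push_neg at hpow
    set d := deg (Finsupp.erase z m) with hd
    rcases Nat.lt_or_ge d 2 with hdlt | hdge
    · interval_cases hdval : d
      · -- d = 0 : m is a power of z
        have hez : Finsupp.erase z m = 0 := deg_eq_zero hdval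
        have hmz : m = Finsupp.single z (m z) := by
          conv_lhs => rw [erase_add_single z m]
          rw [hez, add_zero]
        rcases Nat.eq_zero_or_pos (m z) with h0 | h0
        · rw [h0, Finsupp.single_zero] at hmz
          apply htail
          exact ⟨m, hm, by rw [hmz]; exact zero_le⟩
        · exact hpow (m z) h0 (hmz ▸ hm)
      · -- d = 1 : m = z^s * t
        obtain ⟨t, ht⟩ := eq_single_of_deg_one hdval
        have htz : t ≠ z := by
          intro hteq
          have h1 : Finsupp.erase z m t = 1 := by rw [ht]; simp
          rw [hteq, Finsupp.erase_same] at h1; omega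
        have hmsum : m = Finsupp.single z (m z) + Finsupp.single t 1 := by
          conv_lhs => rw [erase_add_single z m]
          rw [ht]
        have hcard : m.support.card ≤ 2 := by
          rw [hmsum]; exact card_two_support z t (m z) 1
        have hBz : m z ≤ mbound M z := by
          have := le_mbound hfin hm hcard z
          exact this
        refine endgame m hm t htz ?_ ?_ ?_ ?_
        · intro c hcz hct
          rw [hmsum]
          simp [Finsupp.single_apply, Ne.symm hcz, Ne.symm hct]
        · rw [hmsum]; simp [Finsupp.single_apply, Ne.symm htz]
        · exact hmlec t
        · rw [piW_apply] at hbz ⊢; omega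
    · -- d ≥ 2 : use (iii)
      obtain ⟨r, hr, t, htz, htm, hwM⟩ := h3 m hm z hpow hdge
      have hcard : (Finsupp.single z r + Finsupp.single t 1).support.card ≤ 2 :=
        card_two_support z t r 1
      have hBz : r ≤ mbound M z := by
        have := le_mbound hfin hwM hcard z
        rw [Finsupp.add_apply, Finsupp.single_apply, Finsupp.single_apply] at this
        rw [if_pos rfl, if_neg htz] at this
        omega
      refine endgame _ hwM t htz ?_ ?_ ?_ ?_
      · intro c hcz hct
        rw [Finsupp.add_apply, Finsupp.single_apply, Finsupp.single_apply]
        rw [if_neg (Ne.symm hcz), if_neg (Ne.symm hct)]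
        omega
      · rw [Finsupp.add_apply, Finsupp.single_apply, Finsupp.single_apply]
        rw [if_neg (Ne.symm htz), if_pos rfl]
      · have h1 : 1 ≤ m t := Finsupp.mem_support_iff.mp htm |> Nat.one_le_iff_ne_zero.mpr
        have h2 := hmlec t
        rw [Finsupp.add_apply, Finsupp.single_apply, Finsupp.single_apply]
        rw [if_neg (Ne.symm htz), if_pos rfl]
        omega
      · have := le_mbound hfin hwM hcard z
        rw [piW_apply] at hbz ⊢
        omega

lemma imp34 {M : Set (X →₀ ℕ)} (hfin : M.Finite)
    (h3 : ∀ m ∈ M, ∀ z : X, (∀ r : ℕ, 1 ≤ r → Finsupp.single z r ∉ M) →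
      2 ≤ ((Finsupp.erase z m).sum fun _ e => e) →
      ∃ r : ℕ, 1 ≤ r ∧ ∃ t : X, t ≠ z ∧ t ∈ m.support ∧
        Finsupp.single z r + Finsupp.single t 1 ∈ M) :
    wordIdeal {u : List X | piW u ∈ monIdeal M ∧ ∀ x : X, piW u x ≤ mbound M x} =
      piW ⁻¹' monIdeal M := by
  apply Set.eq_of_subset_of_subset
  · rintro u ⟨s, ⟨hs, _⟩, hinf⟩
    exact J_infix hinf hs
  · have main : ∀ n, ∀ u : List X, u.length ≤ n → piW u ∈ monIdeal M →
        u ∈ wordIdeal {u : List X | piW u ∈ monIdeal M ∧ ∀ x : X, piW u x ≤ mbound M x} := by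
      intro n
      induction n with
      | zero =>
        intro u hlen huJ
        have : u = [] := List.length_eq_zero_iff.mp (Nat.le_zero.mp hlen)
        refine ⟨u, ⟨huJ, ?_⟩, List.infix_refl u⟩
        intro x; rw [this]; simp [piW_apply]
      | succ n IH =>
        intro u hlen huJ
        by_cases h1 : piW u.tail ∈ monIdeal M
        · obtain ⟨s, hs, hinf⟩ := IH u.tail (by rw [List.length_tail]; omega) h1
          exact ⟨s, hs, hinf.trans (List.tail_suffix u).isInfix⟩
        · by_cases h2 : piW u.dropLast ∈ monIdeal M
          · obtain ⟨s, hs, hinf⟩ := IH u.dropLast (by rw [List.length_dropLast]; omega) h2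
            exact ⟨s, hs, hinf.trans (List.dropLast_prefix u).isInfix⟩
          · exact ⟨u, ⟨huJ, minimal_bounded hfin h3 u huJ h1 h2⟩, List.infix_refl u⟩
    intro u huJ
    exact main u.length u le_rfl huJ

lemma imp41 {M : Set (X →₀ ℕ)} (hfin : M.Finite)
    (heq : wordIdeal {u : List X | piW u ∈ monIdeal M ∧
        ∀ x : X, piW u x ≤ mbound M x} = piW ⁻¹' monIdeal M) :
    FGIdeal (piW ⁻¹' monIdeal M) := by
  refine ⟨_, ?_, heq⟩
  -- finiteness of the generating set
  set M2 : Set (X →₀ ℕ) := {v ∈ M | v.support.card ≤ 2} with hM2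
  have hM2fin : M2.Finite := hfin.subset (Set.sep_subset _ _)
  set F : Finset X := hM2fin.toFinset.sup Finsupp.support with hF
  set L : ℕ := F.sum (fun x => mbound M x) with hL
  have hmemF : ∀ u ∈ {u : List X | piW u ∈ monIdeal M ∧ ∀ x : X, piW u x ≤ mbound M x},
      ∀ c ∈ u, c ∈ F := by
    rintro u ⟨_, hbound⟩ c hc
    have h1 : 1 ≤ piW u c := by
      rw [piW_apply]; exact List.one_le_count_iff.mpr hc
    have h2 : 1 ≤ mbound M c := le_trans h1 (hbound c)
    have hne : {n : ℕ | ∃ v ∈ M, v.support.card ≤ 2 ∧ v c = n}.Nonempty := by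
      by_contra hemp
      rw [Set.not_nonempty_iff_eq_empty] at hemp
      rw [mbound, hemp] at h2
      simp at h2
    have hmem := hne.csSup_mem (mbound_set_finite hfin c)
    obtain ⟨v, hvM, hvcard, hvc⟩ := hmem
    have hvM2 : v ∈ hM2fin.toFinset := hM2fin.mem_toFinset.mpr ⟨hvM, hvcard⟩
    have hsub : v.support ⊆ F := Finset.le_sup hvM2
    apply hsub
    rw [Finsupp.mem_support_iff, hvc]
    rw [mbound] at h2
    omega
  have hlen : ∀ u ∈ {u : List X | piW u ∈ monIdeal M ∧ ∀ x : X, piW u x ≤ mbound M x},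
      u.length ≤ L := by
    intro u hu
    have hsupp : (piW u).support ⊆ F := by
      intro x hx
      rw [Finsupp.mem_support_iff, piW_apply] at hx
      exact hmemF u hu x (List.count_pos_iff.mp (Nat.pos_of_ne_zero hx))
    calc u.length = deg (piW u) := (deg_piW u).symm
    _ = ∑ x ∈ F, piW u x := by
        rw [deg, Finsupp.sum]
        exact Finset.sum_subset hsupp (fun x _ hx => Finsupp.notMem_support_iff.mp hx)
    _ ≤ L := Finset.sum_le_sum (fun x _ => hu.2 x)
  apply Set.Finite.subset
    (Set.Finite.image (fun l : List {x // x ∈ F} => l.map Subtype.val)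
      (List.finite_length_le _ L))
  intro u hu
  refine ⟨u.attach.map (fun x => (⟨x.1, hmemF u hu x.1 x.2⟩ : {x // x ∈ F})), ?_, ?_⟩
  · simp only [Set.mem_setOf_eq, List.length_map, List.length_attach]
    exact hlen u hu
  · dsimp only
    rw [List.map_map]
    have hcomp : (Subtype.val ∘ fun x : {c // c ∈ u} =>
        (⟨x.1, hmemF u hu x.1 x.2⟩ : {x // x ∈ F})) = fun x : {c // c ∈ u} => x.1 := rfl
    rw [hcomp]
    exact List.attach_map_subtype_val u

end Stmt16Aux

/-- For a finite antichain `M` of monomials, the following are equivalent: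
(i) `π⁻¹(⟨M⟩)` is a finitely generated ideal of the free monoid;
(ii) for every `m ∈ M` and letters `x`, `y`, `z` with `z ≠ x`, `z ≠ y` (possibly `x = y`)
such that `xy` divides `m`, some `w ∈ M` satisfies `w/z ∣ m·x⁻¹` or `w/z ∣ m·y⁻¹`;
(iii) for every `m ∈ M` and letter `z` no power of which lies in `M`, if `m/z` has total
degree at least `2`, then `z^r·t ∈ M` for some `r ≥ 1` and letter `t ≠ z` in the support
of `m`;
(iv) `π⁻¹(⟨M⟩)` is generated by the words `u` with `π(u) ∈ ⟨M⟩` and every exponent of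
`π(u)` bounded by the corresponding maximal exponent over `M₂`. -/
theorem stmt16 (M : Set (X →₀ ℕ)) (hfin : M.Finite) (hM : IsMonAntichain M) :
    (FGIdeal (piW ⁻¹' monIdeal M) ↔
      (∀ m ∈ M, ∀ x y z : X, z ≠ x → z ≠ y →
        Finsupp.single x 1 + Finsupp.single y 1 ≤ m →
        ∃ w ∈ M, Finsupp.erase z w ≤ m - Finsupp.single x 1 ∨
          Finsupp.erase z w ≤ m - Finsupp.single y 1)) ∧
    ((∀ m ∈ M, ∀ x y z : X, z ≠ x → z ≠ y →
        Finsupp.single x 1 + Finsupp.single y 1 ≤ m →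
        ∃ w ∈ M, Finsupp.erase z w ≤ m - Finsupp.single x 1 ∨
          Finsupp.erase z w ≤ m - Finsupp.single y 1) ↔
      (∀ m ∈ M, ∀ z : X, (∀ r : ℕ, 1 ≤ r → Finsupp.single z r ∉ M) →
        2 ≤ ((Finsupp.erase z m).sum fun _ e => e) →
        ∃ r : ℕ, 1 ≤ r ∧ ∃ t : X, t ≠ z ∧ t ∈ m.support ∧
          Finsupp.single z r + Finsupp.single t 1 ∈ M)) ∧
    ((∀ m ∈ M, ∀ z : X, (∀ r : ℕ, 1 ≤ r → Finsupp.single z r ∉ M) →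
        2 ≤ ((Finsupp.erase z m).sum fun _ e => e) →
        ∃ r : ℕ, 1 ≤ r ∧ ∃ t : X, t ≠ z ∧ t ∈ m.support ∧
          Finsupp.single z r + Finsupp.single t 1 ∈ M) ↔
      wordIdeal {u : List X | piW u ∈ monIdeal M ∧
          ∀ x : X, piW u x ≤ sSup {n : ℕ | ∃ v ∈ M, v.support.card ≤ 2 ∧ v x = n}} =
        piW ⁻¹' monIdeal M) := by
  
  refine ⟨⟨fun h1 => Stmt16Aux.imp12 h1,
      fun h2 => Stmt16Aux.imp41 hfin (Stmt16Aux.imp34 hfin (Stmt16Aux.imp23 hM h2))⟩,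
    ⟨fun h2 => Stmt16Aux.imp23 hM h2,
      fun h3 => Stmt16Aux.imp12 (Stmt16Aux.imp41 hfin (Stmt16Aux.imp34 hfin h3))⟩,
    ⟨fun h3 => Stmt16Aux.imp34 hfin h3,
      fun h4 => Stmt16Aux.imp23 hM (Stmt16Aux.imp12 (Stmt16Aux.imp41 hfin h4))⟩⟩
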